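/- The barycenter o' of e_1,...,e_c is the orthogonal projection of each e_i with i > c onto the affine subspace F spanned by e_1,...,e_c; consequently o' minimizes δ(q) = (Σ_{i=1}^n ‖q - e_i‖^ρ)^{1/ρ} over all q ∈ F. -/

import Mathlib

private lemma euclid_sum_apply {ι : Type*} {n : ℕ} (s : Finset ι)
    (f : ι → EuclideanSpace ℝ (Fin n)) (j : Fin n) :
    (∑ i ∈ s, f i) j = ∑ i ∈ s, f i j := by
  classical
  induction s using Finset.cons_induction with
  | empty => rfl
  | cons a s ha ih => rw [Finset.sum_cons, Finset.sum_cons, ← ih]; rfl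

private lemma sum_fin_split {M : Type*} [AddCommMonoid M] {n c : ℕ} (hcn : c ≤ n) (f : Fin n → M)
    (hf : ∀ j : Fin n, c ≤ (j : ℕ) → f j = 0) :
    ∑ j, f j = ∑ m : Fin c, f ⟨m, lt_of_lt_of_le m.2 hcn⟩ := by
  have hn : c + (n - c) = n := Nat.add_sub_cancel' hcn
  have h1 : ∑ j, f j = ∑ a : Fin c ⊕ Fin (n - c), f ((finSumFinEquiv.trans (finCongr hn)) a) :=
    (Equiv.sum_comp _ f).symm
  rw [h1, Fintype.sum_sum_type]
  have h2 : ∀ m : Fin (n - c), f ((finSumFinEquiv.trans (finCongr hn)) (Sum.inr m)) = 0 := by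
    intro m
    apply hf
    simp [finSumFinEquiv_apply_right, finCongr_apply]
  simp only [h2, Finset.sum_const_zero, add_zero]
  refine Finset.sum_congr rfl fun m _ => congrArg f (Fin.ext ?_)
  simp [finCongr_apply]

open Finset RealInnerProductSpace in
theorem face_barycenter_is_projection_and_minimizer (n c : ℕ) (hc : 1 ≤ c) (hcn : c ≤ n)
    (ρ : ℝ) (hρ : 1 ≤ ρ)
    (o' : EuclideanSpace ℝ (Fin n))
    (ho' : o' = (WithLp.equiv 2 (Fin n → ℝ)).symm (fun j => if (j : ℕ) < c then 1/c else 0))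
    (F : AffineSubspace ℝ (EuclideanSpace ℝ (Fin n)))
    (hF : F = affineSpan ℝ {x | ∃ i : Fin n, (i : ℕ) < c ∧ x = EuclideanSpace.single i (1:ℝ)}) :
    o' ∈ F ∧
    (∀ i : Fin n, c ≤ (i : ℕ) → ∀ x ∈ F,
      inner ℝ (EuclideanSpace.single i (1:ℝ) - o') (x - o') = (0:ℝ)) ∧
    (∀ q, q ∈ F →
      (∑ i, dist o' (EuclideanSpace.single i (1:ℝ)) ^ ρ) ^ (1/ρ)
        ≤ (∑ i, dist q (EuclideanSpace.single i (1:ℝ)) ^ ρ) ^ (1/ρ)) := by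
  have hcR : (0:ℝ) < (c:ℝ) := by exact_mod_cast hc
  have ho'j : ∀ j : Fin n, o' j = if (j:ℕ) < c then 1/(c:ℝ) else 0 := by
    intro j; rw [ho']; rfl
  -- characterization of membership in F
  have hchar : ∀ x, x ∈ F → ((∀ j : Fin n, c ≤ (j:ℕ) → x j = 0) ∧
      ∑ m : Fin c, x ⟨m, lt_of_lt_of_le m.2 hcn⟩ = 1) := by
    intro x hx
    rw [hF] at hx
    refine affineSpan_induction (p := fun x : EuclideanSpace ℝ (Fin n) => (∀ j : Fin n, c ≤ (j:ℕ) → x j = 0) ∧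
      ∑ m : Fin c, x ⟨(m:ℕ), lt_of_lt_of_le m.2 hcn⟩ = 1) hx ?_ ?_
    · rintro y ⟨i, hi, rfl⟩
      constructor
      · intro j hj
        rw [EuclideanSpace.single_apply, if_neg]
        intro h
        rw [h] at hj
        omega
      · rw [Finset.sum_congr rfl (fun (m : Fin c) _ =>
          EuclideanSpace.single_apply i 1 ⟨(m:ℕ), lt_of_lt_of_le m.2 hcn⟩)]
        have : ∀ m : Fin c, ((⟨(m:ℕ), lt_of_lt_of_le m.2 hcn⟩ : Fin n) = i)
            ↔ m = ⟨(i:ℕ), hi⟩ := by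
          intro m
          constructor <;> intro h <;> [skip; skip] <;>
            · apply Fin.ext
              have := congrArg (Fin.val) h
              simpa using this
        rw [Finset.sum_congr rfl (fun m _ => by rw [if_congr (this m) rfl rfl])]
        rw [Finset.sum_ite_eq' Finset.univ (⟨(i:ℕ), hi⟩ : Fin c) (fun _ => (1:ℝ))]
        simp
    · rintro r u v w ⟨hu1, hu2⟩ ⟨hv1, hv2⟩ ⟨hw1, hw2⟩
      have happ : ∀ j : Fin n, (r • (u -ᵥ v) +ᵥ w) j = r * (u j - v j) + w j := fun j => rfl
      constructor
      · intro j hj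
        rw [happ, hu1 j hj, hv1 j hj, hw1 j hj]; ring
      · rw [Finset.sum_congr rfl (fun (m : Fin c) _ => happ ⟨(m:ℕ), lt_of_lt_of_le m.2 hcn⟩)]
        rw [Finset.sum_add_distrib, ← Finset.mul_sum, Finset.sum_sub_distrib, hu2, hv2, hw2]
        ring
  -- o' is in F
  have hw1 : ∑ _m : Fin c, (c:ℝ)⁻¹ = 1 := by
    rw [Finset.sum_const, Finset.card_univ, Fintype.card_fin, nsmul_eq_mul]
    field_simp
  have ho'F : o' ∈ F := by
    rw [hF]
    have hcomb := affineCombination_mem_affineSpan (k := ℝ) hw1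
      (fun m : Fin c => EuclideanSpace.single (⟨(m:ℕ), lt_of_lt_of_le m.2 hcn⟩ : Fin n) (1:ℝ))
    have hrange : Set.range (fun m : Fin c =>
        EuclideanSpace.single (⟨(m:ℕ), lt_of_lt_of_le m.2 hcn⟩ : Fin n) (1:ℝ))
        = {x | ∃ i : Fin n, (i:ℕ) < c ∧ x = EuclideanSpace.single i (1:ℝ)} := by
      ext y
      constructor
      · rintro ⟨m, rfl⟩; exact ⟨_, m.2, rfl⟩
      · rintro ⟨i, hi, rfl⟩
        exact ⟨⟨(i:ℕ), hi⟩, rfl⟩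
    have heq : (Finset.univ.affineCombination ℝ
        (fun m : Fin c => EuclideanSpace.single (⟨(m:ℕ), lt_of_lt_of_le m.2 hcn⟩ : Fin n) (1:ℝ))
        fun _ => (c:ℝ)⁻¹) = o' := by
      rw [Finset.affineCombination_eq_linear_combination _ _ _ hw1]
      ext j
      rw [euclid_sum_apply, ho'j]
      have happ : ∀ m : Fin c, ((c:ℝ)⁻¹ • EuclideanSpace.single
          (⟨(m:ℕ), lt_of_lt_of_le m.2 hcn⟩ : Fin n) (1:ℝ)) j
          = (c:ℝ)⁻¹ * (if j = ⟨(m:ℕ), lt_of_lt_of_le m.2 hcn⟩ then 1 else 0) := by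
        intro m
        have : ((c:ℝ)⁻¹ • EuclideanSpace.single
            (⟨(m:ℕ), lt_of_lt_of_le m.2 hcn⟩ : Fin n) (1:ℝ)) j
            = (c:ℝ)⁻¹ * EuclideanSpace.single
            (⟨(m:ℕ), lt_of_lt_of_le m.2 hcn⟩ : Fin n) (1:ℝ) j := rfl
        rw [this, EuclideanSpace.single_apply]
      rw [Finset.sum_congr rfl (fun m _ => happ m)]
      by_cases hj : (j:ℕ) < c
      · rw [if_pos hj]
        have : ∀ m : Fin c, (j = (⟨(m:ℕ), lt_of_lt_of_le m.2 hcn⟩ : Fin n))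
            ↔ m = ⟨(j:ℕ), hj⟩ := by
          intro m
          constructor <;> intro h
          · apply Fin.ext; have := congrArg Fin.val h; simpa using this.symm
          · apply Fin.ext; have := congrArg Fin.val h; simpa using this.symm
        rw [Finset.sum_congr rfl (fun m _ => by
          rw [if_congr (this m) rfl rfl])]
        rw [← Finset.mul_sum, Finset.sum_ite_eq' Finset.univ (⟨(j:ℕ), hj⟩ : Fin c)
          (fun _ => (1:ℝ))]
        simp [one_div]
      · rw [if_neg hj]
        apply Finset.sum_eq_zero
        intro m _
        rw [if_neg, mul_zero]
        intro h
        rw [h] at hj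
        exact hj (by simpa using m.2)
    rw [← hrange, ← heq]
    exact hcomb
  refine ⟨ho'F, ?_, ?_⟩
  · -- orthogonality
    intro i hi x hx
    obtain ⟨hx0, hx1⟩ := hchar x hx
    rw [PiLp.inner_apply]
    have happ : ∀ j : Fin n, (inner ℝ ((EuclideanSpace.single i (1:ℝ) - o') j) ((x - o') j) : ℝ)
        = ((if j = i then (1:ℝ) else 0) - o' j) * (x j - o' j) := by
      intro j
      have h1 : (EuclideanSpace.single i (1:ℝ) - o') j
          = EuclideanSpace.single i (1:ℝ) j - o' j := rfl
      have h2 : (x - o') j = x j - o' j := rfl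
      rw [h1, h2, EuclideanSpace.single_apply, RCLike.inner_apply', conj_trivial]
    rw [Finset.sum_congr rfl (fun j _ => happ j)]
    have hsplit : ∑ j : Fin n, ((if j = i then (1:ℝ) else 0) - o' j) * (x j - o' j)
        = (∑ j : Fin n, (if j = i then (1:ℝ) else 0) * (x j - o' j))
          - ∑ j : Fin n, o' j * (x j - o' j) := by
      rw [← Finset.sum_sub_distrib]
      exact Finset.sum_congr rfl fun j _ => by ring
    rw [hsplit]
    have hfirst : ∑ j : Fin n, (if j = i then (1:ℝ) else 0) * (x j - o' j) = 0 := by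
      have : ∀ j : Fin n, (if j = i then (1:ℝ) else 0) * (x j - o' j)
          = if j = i then (x j - o' j) else 0 := by
        intro j; by_cases h : j = i <;> simp [h]
      rw [Finset.sum_congr rfl (fun j _ => this j)]
      rw [Finset.sum_ite_eq' Finset.univ i (fun j => x j - o' j)]
      rw [if_pos (Finset.mem_univ i), hx0 i hi, ho'j i, if_neg (by omega)]
      ring
    have hsecond : ∑ j : Fin n, o' j * (x j - o' j) = 0 := by
      rw [sum_fin_split hcn (fun j => o' j * (x j - o' j))
        (fun j hj => by show o' j * (x j - o' j) = 0; rw [ho'j j, if_neg (by omega)]; ring)]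
      have : ∀ m : Fin c, o' ⟨(m:ℕ), lt_of_lt_of_le m.2 hcn⟩
          * (x ⟨(m:ℕ), lt_of_lt_of_le m.2 hcn⟩ - o' ⟨(m:ℕ), lt_of_lt_of_le m.2 hcn⟩)
          = (1/(c:ℝ)) * x ⟨(m:ℕ), lt_of_lt_of_le m.2 hcn⟩ - (1/(c:ℝ)) * (1/(c:ℝ)) := by
        intro m
        rw [ho'j, if_pos (by simpa using m.2)]
        ring
      rw [Finset.sum_congr rfl (fun m _ => this m)]
      rw [Finset.sum_sub_distrib, ← Finset.mul_sum, hx1, Finset.sum_const,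
        Finset.card_univ, Fintype.card_fin, nsmul_eq_mul]
      field_simp
      ring
    rw [hfirst, hsecond]
    ring
  · -- minimization
    intro q hq
    obtain ⟨hq0, hq1⟩ := hchar q hq
    set g : EuclideanSpace ℝ (Fin n) → ℝ :=
      fun y => ∑ i, dist y (EuclideanSpace.single i (1:ℝ)) ^ ρ with hg
    have hρ0 : (0:ℝ) ≤ ρ := by linarith
    suffices h : g o' ≤ g q by
      apply Real.rpow_le_rpow _ h (by positivity)
      exact Finset.sum_nonneg fun i _ => Real.rpow_nonneg dist_nonneg ρ
    -- convexity of g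
    have hterm : ∀ (i : Fin n) (x y : EuclideanSpace ℝ (Fin n)) (a b : ℝ),
        0 ≤ a → 0 ≤ b → a + b = 1 →
        dist (a • x + b • y) (EuclideanSpace.single i (1:ℝ)) ^ ρ
          ≤ a * dist x (EuclideanSpace.single i (1:ℝ)) ^ ρ
            + b * dist y (EuclideanSpace.single i (1:ℝ)) ^ ρ := by
      intro i x y a b ha hb hab
      set ei := EuclideanSpace.single i (1:ℝ)
      have h' : a • (x - ei) + b • (y - ei) = a • x + b • y - (a + b) • ei := by
        rw [smul_sub, smul_sub, add_smul]; abel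
      have hkey : a • x + b • y - ei = a • (x - ei) + b • (y - ei) := by
        rw [h', hab, one_smul]
      have h1 : dist (a • x + b • y) ei ≤ a * dist x ei + b * dist y ei := by
        rw [dist_eq_norm, dist_eq_norm, dist_eq_norm, hkey]
        calc ‖a • (x - ei) + b • (y - ei)‖ ≤ ‖a • (x - ei)‖ + ‖b • (y - ei)‖ := norm_add_le _ _
          _ = a * ‖x - ei‖ + b * ‖y - ei‖ := by
              rw [norm_smul, norm_smul, Real.norm_of_nonneg ha, Real.norm_of_nonneg hb]
      have h2 := (convexOn_rpow hρ).2 (Set.mem_Ici.mpr (dist_nonneg : (0:ℝ) ≤ dist x ei))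
        (Set.mem_Ici.mpr (dist_nonneg : (0:ℝ) ≤ dist y ei)) ha hb hab
      calc dist (a • x + b • y) ei ^ ρ ≤ (a * dist x ei + b * dist y ei) ^ ρ :=
            Real.rpow_le_rpow dist_nonneg h1 hρ0
        _ ≤ a * dist x ei ^ ρ + b * dist y ei ^ ρ := by
            simpa [smul_eq_mul] using h2
    have hgconv : ConvexOn ℝ Set.univ g := by
      refine ⟨convex_univ, fun x _ y _ a b ha hb hab => ?_⟩
      simp only [hg, smul_eq_mul]
      calc ∑ i, dist (a • x + b • y) (EuclideanSpace.single i (1:ℝ)) ^ ρ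
          ≤ ∑ i, (a * dist x (EuclideanSpace.single i (1:ℝ)) ^ ρ
              + b * dist y (EuclideanSpace.single i (1:ℝ)) ^ ρ) :=
            Finset.sum_le_sum fun i _ => hterm i x y a b ha hb hab
        _ = a * ∑ i, dist x (EuclideanSpace.single i (1:ℝ)) ^ ρ
              + b * ∑ i, dist y (EuclideanSpace.single i (1:ℝ)) ^ ρ := by
            rw [Finset.sum_add_distrib, Finset.mul_sum, Finset.mul_sum]
    -- the cyclic permutations
    haveI : NeZero c := ⟨by omega⟩
    let fc : Fin c ≃ {j : Fin n // (j:ℕ) < c} :=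
      { toFun := fun m => ⟨⟨(m:ℕ), lt_of_lt_of_le m.2 hcn⟩, m.2⟩
        invFun := fun j => ⟨(j.1:ℕ), j.2⟩
        left_inv := fun m => rfl
        right_inv := fun j => rfl }
    let π : Fin c → Equiv.Perm (Fin n) := fun k => (Equiv.addLeft k).extendDomain fc
    -- distance under coordinate permutation
    have hdist : ∀ (σ : Equiv.Perm (Fin n)) (y : EuclideanSpace ℝ (Fin n)) (i : Fin n),
        dist (WithLp.toLp 2 (fun j => y (σ j)))
          (EuclideanSpace.single i (1:ℝ))
        = dist y (EuclideanSpace.single (σ i) (1:ℝ)) := by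
      intro σ y i
      rw [EuclideanSpace.dist_eq, EuclideanSpace.dist_eq]
      congr 1
      rw [← Equiv.sum_comp σ (fun j => dist (y j) (EuclideanSpace.single (σ i) (1:ℝ) j) ^ 2)]
      refine Finset.sum_congr rfl fun j _ => ?_
      have : EuclideanSpace.single i (1:ℝ) j = EuclideanSpace.single (σ i) (1:ℝ) (σ j) := by
        rw [EuclideanSpace.single_apply, EuclideanSpace.single_apply,
          if_congr (σ.injective.eq_iff).symm rfl rfl]
      show dist (y (σ j)) _ ^ 2 = _
      rw [this]
    have hginv : ∀ (σ : Equiv.Perm (Fin n)) (y : EuclideanSpace ℝ (Fin n)),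
        g (WithLp.toLp 2 (fun j => y (σ j))) = g y := by
      intro σ y
      simp only [hg]
      calc ∑ i, dist (WithLp.toLp 2 (fun j => y (σ j)))
            (EuclideanSpace.single i (1:ℝ)) ^ ρ
          = ∑ i, dist y (EuclideanSpace.single (σ i) (1:ℝ)) ^ ρ :=
            Finset.sum_congr rfl fun i _ => by rw [hdist σ y i]
        _ = ∑ i, dist y (EuclideanSpace.single i (1:ℝ)) ^ ρ :=
            Equiv.sum_comp σ (fun i => dist y (EuclideanSpace.single i (1:ℝ)) ^ ρ)
    -- the average of the rotated points is o'
    have havg : ∑ k : Fin c, (c:ℝ)⁻¹ • (WithLp.toLp 2 (fun j => q (π k j)))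
        = o' := by
      ext j
      rw [euclid_sum_apply, ho'j]
      have happ : ∀ k : Fin c, ((c:ℝ)⁻¹ • (WithLp.toLp 2
          (fun j => q (π k j)))) j = (c:ℝ)⁻¹ * q (π k j) := fun k => rfl
      rw [Finset.sum_congr rfl fun k _ => happ k]
      by_cases hj : (j:ℕ) < c
      · rw [if_pos hj]
        have hπ : ∀ k : Fin c, π k j = ((fc (k + ⟨(j:ℕ), hj⟩) : {j : Fin n // (j:ℕ) < c}) : Fin n) := by
          intro k
          show (Equiv.addLeft k).extendDomain fc j = _
          rw [Equiv.Perm.extendDomain_apply_subtype _ fc hj]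
          rfl
        rw [Finset.sum_congr rfl fun k _ => by rw [hπ k]]
        rw [← Finset.mul_sum]
        have hre : ∑ k : Fin c, q ((fc (k + ⟨(j:ℕ), hj⟩) : {j : Fin n // (j:ℕ) < c}) : Fin n)
            = ∑ m : Fin c, q ((fc m : {j : Fin n // (j:ℕ) < c}) : Fin n) :=
          Equiv.sum_comp (Equiv.addRight (⟨(j:ℕ), hj⟩ : Fin c))
            (fun m => q ((fc m : {j : Fin n // (j:ℕ) < c}) : Fin n))
        rw [hre]
        have : ∑ m : Fin c, q ((fc m : {j : Fin n // (j:ℕ) < c}) : Fin n) = 1 := hq1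
        rw [this, mul_one, one_div]
      · rw [if_neg hj]
        apply Finset.sum_eq_zero
        intro k _
        have : π k j = j := by
          show ((Equiv.addLeft k).extendDomain fc) j = j
          exact Equiv.Perm.extendDomain_apply_not_subtype _ fc hj
        rw [this, hq0 j (le_of_not_gt hj), mul_zero]
    -- Jensen
    have hjen := hgconv.map_sum_le (t := Finset.univ) (w := fun _ : Fin c => (c:ℝ)⁻¹)
      (p := fun k : Fin c => (WithLp.toLp 2 (fun j => q (π k j))))
      (fun k _ => by positivity) hw1 (fun k _ => Set.mem_univ _)
    rw [havg] at hjen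
    calc g o' ≤ ∑ k : Fin c, (c:ℝ)⁻¹ •
          g (WithLp.toLp 2 (fun j => q (π k j))) := hjen
      _ = ∑ _k : Fin c, (c:ℝ)⁻¹ * g q := by
          refine Finset.sum_congr rfl fun k _ => ?_
          rw [smul_eq_mul, hginv (π k) q]
      _ = g q := by
          rw [Finset.sum_const, Finset.card_univ, Fintype.card_fin, nsmul_eq_mul]
          field_simp
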